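/- (No Cycle Lemma) If a directed multigraph D is orderable under a pebble distribution p, then there exists an acyclic subgraph D' of D that is orderable under p and satisfies balance(D',p,v) ≥ balance(D,p,v) for every vertex v. -/

import Mathlib

variable {V : Type*} [DecidableEq V]

/-- Result of a pebbling move `u → v`: remove two pebbles from `u`, add one to `v`. -/
def applyMove (p : V → ℕ) (u v : V) (x : V) : ℕ :=
  (if x = u then p x - 2 else p x) + (if x = v then 1 else 0)

/-- A list of moves is a valid sequence of pebbling moves from `p` in `G`. -/
def IsValidSeq (G : SimpleGraph V) : (V → ℕ) → List (V × V) → Prop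
  | _, [] => True
  | p, m :: rest => G.Adj m.1 m.2 ∧ 2 ≤ p m.1 ∧ IsValidSeq G (applyMove p m.1 m.2) rest

/-- The distribution after executing a sequence of pebbling moves. -/
def applySeq (p : V → ℕ) : List (V × V) → V → ℕ
  | [] => p
  | m :: rest => applySeq (applyMove p m.1 m.2) rest

/-- Indegree of a vertex in a directed multigraph (multiset of directed edges). -/
def indeg (D : Multiset (V × V)) (v : V) : ℕ :=
  Multiset.card (D.filter fun e => e.2 = v)

/-- Outdegree of a vertex in a directed multigraph. -/
def outdeg (D : Multiset (V × V)) (v : V) : ℕ :=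
  Multiset.card (D.filter fun e => e.1 = v)

/-- balance(D,p,v) = p(v) + indeg_D(v) - 2·outdeg_D(v). -/
def balance (D : Multiset (V × V)) (p : V → ℕ) (v : V) : ℤ :=
  (p v : ℤ) + (indeg D v : ℤ) - 2 * (outdeg D v : ℤ)

/-- `D` is orderable under `p`: some ordering of the edge multiset of `D`
is a valid sequence of pebbling moves. -/
def Orderable (G : SimpleGraph V) (D : Multiset (V × V)) (p : V → ℕ) : Prop :=
  ∃ σ : List (V × V), (σ : Multiset (V × V)) = D ∧ IsValidSeq G p σ

/-- A directed multigraph is acyclic if its edge relation admits no directed cycle. -/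
def DAcyclic (D : Multiset (V × V)) : Prop :=
  ∀ v : V, ¬ Relation.TransGen (fun a b => (a, b) ∈ D) v v

/-- The strongly connected component of `a` in the directed multigraph `D`. -/
def SCC (D : Multiset (V × V)) (a : V) : Set V :=
  {b | Relation.ReflTransGen (fun x y => (x, y) ∈ D) a b ∧
       Relation.ReflTransGen (fun x y => (x, y) ∈ D) b a}

/-! ### Auxiliary lemmas -/

lemma indeg_cons (e : V × V) (s : Multiset (V × V)) (w : V) :
    indeg (e ::ₘ s) w = (if w = e.2 then 1 else 0) + indeg s w := by
  unfold indeg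
  rw [Multiset.filter_cons, Multiset.card_add]
  by_cases h : w = e.2
  · rw [if_pos h, if_pos h.symm]; simp
  · rw [if_neg h, if_neg (fun hh => h hh.symm)]; simp

lemma outdeg_cons (e : V × V) (s : Multiset (V × V)) (w : V) :
    outdeg (e ::ₘ s) w = (if w = e.1 then 1 else 0) + outdeg s w := by
  unfold outdeg
  rw [Multiset.filter_cons, Multiset.card_add]
  by_cases h : w = e.1
  · rw [if_pos h, if_pos h.symm]; simp
  · rw [if_neg h, if_neg (fun hh => h hh.symm)]; simp

lemma indeg_add (s t : Multiset (V × V)) (w : V) :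
    indeg (s + t) w = indeg s w + indeg t w := by
  simp [indeg, Multiset.filter_add]

lemma outdeg_add (s t : Multiset (V × V)) (w : V) :
    outdeg (s + t) w = outdeg s w + outdeg t w := by
  simp [outdeg, Multiset.filter_add]

lemma applyMove_cast {p : V → ℕ} {u : V} (h : 2 ≤ p u) (v w : V) :
    (applyMove p u v w : ℤ) =
      (p w : ℤ) - 2 * (if w = u then 1 else 0) + (if w = v then 1 else 0) := by
  unfold applyMove
  by_cases hu : w = u
  · have h' : 2 ≤ p w := by rw [hu]; exact h
    by_cases hv : w = v
    · rw [if_pos hu, if_pos hv, if_pos hu, if_pos hv, Nat.cast_add, Nat.cast_sub h']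
      push_cast; ring
    · rw [if_pos hu, if_neg hv, if_pos hu, if_neg hv, Nat.cast_add, Nat.cast_sub h']
      push_cast; ring
  · by_cases hv : w = v
    · rw [if_neg hu, if_pos hv, if_neg hu, if_pos hv]; push_cast; ring
    · rw [if_neg hu, if_neg hv, if_neg hu, if_neg hv]; push_cast; ring

lemma valid_applySeq {G : SimpleGraph V} {p : V → ℕ} {σ : List (V × V)}
    (h : IsValidSeq G p σ) (w : V) :
    (applySeq p σ w : ℤ) = balance (↑σ) p w := by
  induction σ generalizing p with
  | nil => simp [applySeq, balance, indeg, outdeg]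
  | cons e t ih =>
    obtain ⟨hadj, hp, hval⟩ := h
    show (applySeq (applyMove p e.1 e.2) t w : ℤ) = balance (↑(e :: t)) p w
    rw [ih hval]
    unfold balance
    rw [show ((e :: t : List (V × V)) : Multiset (V × V)) = e ::ₘ ↑t from rfl,
      indeg_cons, outdeg_cons, applyMove_cast hp]
    push_cast
    ring

lemma adj_of_valid {G : SimpleGraph V} {p : V → ℕ} {σ : List (V × V)}
    (h : IsValidSeq G p σ) : ∀ e ∈ σ, G.Adj e.1 e.2 := by
  induction σ generalizing p with
  | nil => simp
  | cons e t ih =>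
    obtain ⟨hadj, hp, hval⟩ := h
    intro f hf
    rcases List.mem_cons.1 hf with rfl | hf
    · exact hadj
    · exact ih hval f hf

lemma DAcyclic.mono {D E : Multiset (V × V)} (hle : E ≤ D) (h : DAcyclic D) : DAcyclic E :=
  fun v hv => h v (Relation.TransGen.mono (r := fun a b => (a, b) ∈ E) (p := fun a b => (a, b) ∈ D)
    (fun a b hab => Multiset.mem_of_le hle hab) v v hv)

lemma dacyclic_zero : DAcyclic (0 : Multiset (V × V)) := by
  intro v hv
  cases hv with
  | single h => simp at h
  | tail _ h => simp at h

/-! ### Closed walks -/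

/-- A nonempty, cyclically-chained list of edges. -/
def ClosedWalk (es : List (V × V)) : Prop :=
  es ≠ [] ∧ es.Chain' (fun e f => e.2 = f.1) ∧
    es.getLast?.map Prod.snd = es.head?.map Prod.fst

def toEdges : V → List V → List (V × V)
  | _, [] => []
  | a, b :: t => (a, b) :: toEdges b t

lemma toEdges_mem {D : Multiset (V × V)} : ∀ {a : V} {l : List V},
    List.Chain (fun x y => (x, y) ∈ D) a l → ∀ e ∈ toEdges a l, e ∈ D := by
  intro a l h
  induction l generalizing a with
  | nil => simp [toEdges]
  | cons b t ih =>
    rw [List.Chain, List.isChain_cons_cons] at h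
    intro e he
    rcases List.mem_cons.1 he with rfl | he
    · exact h.1
    · exact ih h.2 e he

lemma toEdges_chain' : ∀ (a : V) (l : List V),
    (toEdges a l).Chain' (fun e f => e.2 = f.1) := by
  intro a l
  induction l generalizing a with
  | nil => simp [toEdges, List.Chain']
  | cons b t ih =>
    show List.Chain' _ ((a, b) :: toEdges b t)
    rw [List.Chain', List.isChain_cons]
    refine ⟨?_, ih b⟩
    intro y hy
    cases t with
    | nil => simp [toEdges] at hy
    | cons c t' =>
      simp only [toEdges, List.head?_cons, Option.mem_def, Option.some.injEq] at hy
      rw [← hy]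

lemma toEdges_map_snd : ∀ (a : V) (l : List V), (toEdges a l).map Prod.snd = l := by
  intro a l
  induction l generalizing a with
  | nil => simp [toEdges]
  | cons b t ih => simp [toEdges, ih b]

lemma toEdges_ne_nil (a : V) {l : List V} (h : l ≠ []) : toEdges a l ≠ [] := by
  cases l with
  | nil => exact absurd rfl h
  | cons b t => simp [toEdges]

lemma toEdges_head?_fst (a : V) {l : List V} (h : l ≠ []) :
    (toEdges a l).head?.map Prod.fst = some a := by
  cases l with
  | nil => exact absurd rfl h
  | cons b t => simp [toEdges]

lemma chain_append_singleton {r : V → V → Prop} :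
    ∀ {l : List V} {a c : V}, List.Chain r a l →
      r ((a :: l).getLast (List.cons_ne_nil a l)) c → List.Chain r a (l ++ [c]) := by
  intro l
  induction l with
  | nil =>
    intro a c _ h2
    simp only [List.getLast_singleton] at h2
    exact List.Chain.cons h2 List.Chain.nil
  | cons b t ih =>
    intro a c h1 h2
    rw [List.Chain, List.isChain_cons_cons] at h1
    show List.Chain r a (b :: (t ++ [c]))
    rw [List.Chain, List.isChain_cons_cons]
    refine ⟨h1.1, ih h1.2 ?_⟩
    rw [show (b :: t).getLast (List.cons_ne_nil b t)
        = (a :: b :: t).getLast (List.cons_ne_nil a (b :: t)) from (List.getLast_cons_cons).symm]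
    exact h2

lemma exists_closedWalk {D : Multiset (V × V)} (h : ¬ DAcyclic D) :
    ∃ es : List (V × V), ClosedWalk es ∧ ∀ e ∈ es, e ∈ D := by
  unfold DAcyclic at h
  push_neg at h
  obtain ⟨v, hv⟩ := h
  rw [Relation.TransGen.tail'_iff] at hv
  obtain ⟨b, hvb, hbv⟩ := hv
  obtain ⟨l, hchain, hlast⟩ := List.exists_isChain_cons_of_relationReflTransGen hvb
  have hchain2 : List.Chain (fun x y => (x, y) ∈ D) v (l ++ [v]) := by
    refine chain_append_singleton hchain ?_
    rw [hlast]; exact hbv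
  have hne : l ++ [v] ≠ [] := by simp
  refine ⟨toEdges v (l ++ [v]), ⟨toEdges_ne_nil v hne, toEdges_chain' v _, ?_⟩,
    toEdges_mem hchain2⟩
  rw [← List.getLast?_map, toEdges_map_snd, toEdges_head?_fst v hne, List.getLast?_concat]

lemma closedWalk_rotate_one {es : List (V × V)} (h : ClosedWalk es) :
    ClosedWalk (es.rotate 1) := by
  obtain ⟨hne, hch, hcl⟩ := h
  cases es with
  | nil => exact absurd rfl hne
  | cons e t =>
    cases t with
    | nil =>
      rw [List.rotate_singleton]
      exact ⟨hne, hch, hcl⟩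
    | cons f t' =>
      have hrot : (e :: f :: t').rotate 1 = (f :: t') ++ [e] := by
        rw [show (1 : ℕ) = 0 + 1 from rfl, List.rotate_cons_succ, List.rotate_zero]
      rw [hrot]
      have hch' := (List.isChain_cons.1 hch).2
      have hef : e.2 = f.1 := (List.isChain_cons_cons.1 hch).1
      refine ⟨by simp, ?_, ?_⟩
      · rw [List.Chain', List.isChain_append]
        refine ⟨hch', List.isChain_singleton e, ?_⟩
        intro x hx y hy
        simp only [List.head?_cons, Option.mem_def, Option.some.injEq] at hy
        subst hy
        have hgl : (e :: f :: t').getLast? = (f :: t').getLast? := by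
          rw [List.getLast?_eq_getLast (by simp), List.getLast?_eq_getLast (by simp),
            List.getLast_cons_cons]
        rw [hgl] at hcl
        simp only [List.head?_cons, Option.map_some] at hcl
        have : x ∈ (f :: t').getLast? := hx
        rw [Option.mem_def] at this
        have := congrArg (Option.map Prod.snd) (this)
        simp only [Option.map_some] at this
        rw [this] at hcl
        exact Option.some.inj hcl
      · rw [List.getLast?_concat]
        have : ((f :: t') ++ [e]).head? = some f := by simp
        rw [this]
        simp [hef]

lemma closedWalk_rotate {es : List (V × V)} (h : ClosedWalk es) (n : ℕ) :
    ClosedWalk (es.rotate n) := by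
  induction n with
  | zero => simpa using h
  | succ k ih =>
    rw [show k + 1 = k + 1 from rfl, ← List.rotate_rotate]
    exact closedWalk_rotate_one ih

lemma exists_dup_split {l : List (V × V)} (h : ¬ l.Nodup) :
    ∃ A e B C, l = A ++ e :: B ++ e :: C := by
  induction l with
  | nil => simp at h
  | cons x t ih =>
    by_cases hx : x ∈ t
    · obtain ⟨B, C, rfl⟩ := List.append_of_mem hx
      exact ⟨[], x, B, C, rfl⟩
    · have : ¬ t.Nodup := fun hn => h (List.nodup_cons.2 ⟨hx, hn⟩)
      obtain ⟨A, e, B, C, rfl⟩ := ih this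
      exact ⟨x :: A, e, B, C, rfl⟩

lemma exists_nodup_closedWalk : ∀ (n : ℕ) (es : List (V × V)), es.length ≤ n →
    ClosedWalk es → ∃ fs, ClosedWalk fs ∧ fs.Nodup ∧ ∀ e ∈ fs, e ∈ es := by
  intro n
  induction n with
  | zero =>
    intro es hlen hcw
    exact absurd (List.length_eq_zero_iff.1 (Nat.le_zero.1 hlen)) hcw.1
  | succ n ih =>
    intro es hlen hcw
    by_cases hnd : es.Nodup
    · exact ⟨es, hcw, hnd, fun e he => he⟩
    · obtain ⟨A, e, B, C, hsplit⟩ := exists_dup_split hnd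
      subst hsplit
      have h1 : (A ++ e :: B ++ e :: C).rotate A.length = (e :: B) ++ (e :: (C ++ A)) := by
        rw [List.rotate_eq_drop_append_take
          (by simp only [List.length_append, List.length_cons]; omega)]
        rw [show A ++ e :: B ++ e :: C = A ++ (e :: B ++ e :: C) by simp]
        rw [List.drop_left, List.take_left]
        simp
      have hcw' : ClosedWalk ((A ++ e :: B ++ e :: C).rotate A.length) :=
        closedWalk_rotate hcw _
      rw [h1] at hcw'
      obtain ⟨-, hch, hcl⟩ := hcw'
      obtain ⟨hchB, hchC, hbd⟩ := List.isChain_append.1 hch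
      have hglB : ∃ g, (e :: B).getLast? = some g := ⟨_, List.getLast?_eq_getLast (by simp)⟩
      obtain ⟨g, hg⟩ := hglB
      have hge : g.2 = e.1 := hbd g (by rw [hg]; rfl) e (by simp)
      have hcw0 : ClosedWalk (e :: B) := by
        refine ⟨by simp, hchB, ?_⟩
        rw [hg]
        simp [hge]
      have hlen0 : (e :: B).length ≤ n := by
        simp only [List.length_append, List.length_cons] at hlen ⊢
        omega
      obtain ⟨fs, hfs1, hfs2, hfs3⟩ := ih (e :: B) hlen0 hcw0
      refine ⟨fs, hfs1, hfs2, fun f hf => ?_⟩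
      have : f ∈ (A ++ e :: B ++ e :: C).rotate A.length := by
        rw [h1]
        exact List.mem_append.2 (Or.inl (hfs3 f hf))
      rwa [List.mem_rotate] at this

lemma closedWalk_map_snd_perm {es : List (V × V)} (h : ClosedWalk es) :
    (es.map Prod.snd).Perm (es.map Prod.fst) := by
  obtain ⟨hne, hch, hcl⟩ := h
  cases es with
  | nil => exact absurd rfl hne
  | cons e t =>
    have key : ∀ (t : List (V × V)) (e : V × V),
        List.Chain' (fun a b : V × V => a.2 = b.1) (e :: t) →
        (e :: t).map Prod.snd
          = t.map Prod.fst ++ [((e :: t).getLast (List.cons_ne_nil e t)).2] := by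
      intro t
      induction t with
      | nil => intro e _; simp
      | cons f t' ih =>
        intro e hch
        have hef : e.2 = f.1 := (List.isChain_cons_cons.1 hch).1
        have h2 := ih f (List.isChain_cons_cons.1 hch).2
        rw [List.map_cons, h2, List.getLast_cons_cons, hef]
        simp
    rw [key t e hch]
    rw [List.getLast?_eq_getLast (by simp)] at hcl
    simp only [List.head?_cons, Option.map_some] at hcl
    have hlast : ((e :: t).getLast (List.cons_ne_nil e t)).2 = e.1 := Option.some.inj hcl
    rw [hlast]
    simpa using List.perm_append_singleton e.1 (t.map Prod.fst)

lemma indeg_eq_count (s : Multiset (V × V)) (w : V) :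
    indeg s w = (s.map Prod.snd).count w := by
  rw [indeg, Multiset.count_map]
  congr 1
  apply Multiset.filter_congr
  intro e _
  exact eq_comm

lemma outdeg_eq_count (s : Multiset (V × V)) (w : V) :
    outdeg s w = (s.map Prod.fst).count w := by
  rw [outdeg, Multiset.count_map]
  congr 1
  apply Multiset.filter_congr
  intro e _
  exact eq_comm

lemma closedWalk_indeg_eq_outdeg {es : List (V × V)} (h : ClosedWalk es) (w : V) :
    indeg (↑es) w = outdeg (↑es) w := by
  rw [indeg_eq_count, outdeg_eq_count]
  have hperm := closedWalk_map_snd_perm h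
  have : ((es : Multiset (V × V)).map Prod.snd) = ((es : Multiset (V × V)).map Prod.fst) := by
    rw [show ((es : Multiset (V × V)).map Prod.snd) = (es.map Prod.snd : List V) from rfl,
      show ((es : Multiset (V × V)).map Prod.fst) = (es.map Prod.fst : List V) from rfl]
    exact Quot.sound hperm
  rw [this]

/-! ### Acyclic subgraph extraction -/

lemma exists_acyclic_sub (p : V → ℕ) : ∀ (n : ℕ) (D : Multiset (V × V)),
    Multiset.card D ≤ n →
    ∃ D' ≤ D, DAcyclic D' ∧ ∀ w, balance D p w ≤ balance D' p w := by
  intro n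
  induction n with
  | zero =>
    intro D hc
    have hD : D = 0 := Multiset.card_eq_zero.1 (Nat.le_zero.1 hc)
    subst hD
    exact ⟨0, le_rfl, dacyclic_zero, fun w => le_rfl⟩
  | succ n ih =>
    intro D hc
    by_cases hac : DAcyclic D
    · exact ⟨D, le_rfl, hac, fun w => le_rfl⟩
    · obtain ⟨es0, hcw0, hmem0⟩ := exists_closedWalk hac
      obtain ⟨fs, hcw, hnd, hsub⟩ := exists_nodup_closedWalk es0.length es0 le_rfl hcw0
      have hmem : ∀ e ∈ fs, e ∈ D := fun e he => hmem0 e (hsub e he)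
      have hle : (fs : Multiset (V × V)) ≤ D := by
        rw [Multiset.le_iff_count]
        intro e
        by_cases he : e ∈ fs
        · have h1 : Multiset.count e (fs : Multiset (V × V)) ≤ 1 :=
            Multiset.nodup_iff_count_le_one.1 (by rwa [Multiset.coe_nodup]) e
          have h2 : 1 ≤ Multiset.count e D := Multiset.one_le_count_iff_mem.2 (hmem e he)
          omega
        · have h0 : Multiset.count e (fs : Multiset (V × V)) = 0 :=
            Multiset.count_eq_zero.2 (by simpa using he)
          simp [h0]
      obtain ⟨E, hE⟩ := Multiset.le_iff_exists_add.1 hle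
      have hfslen : 1 ≤ fs.length := List.length_pos_iff.2 hcw.1
      have hcardE : Multiset.card E ≤ n := by
        have h2 : Multiset.card D = fs.length + Multiset.card E := by
          rw [hE]; simp
        omega
      obtain ⟨D', hD'le, hD'ac, hD'bal⟩ := ih E hcardE
      refine ⟨D', hD'le.trans (by rw [hE]; exact le_add_self), hD'ac, fun w => ?_⟩
      refine le_trans ?_ (hD'bal w)
      rw [hE]
      unfold balance
      rw [indeg_add, outdeg_add]
      have hio := closedWalk_indeg_eq_outdeg hcw w
      push_cast
      omega

/-! ### Source vertex in an acyclic multigraph -/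

lemma exists_source {D : Multiset (V × V)} (hac : DAcyclic D) (hne : D ≠ 0) :
    ∃ e ∈ D, ∀ x : V, (x, e.1) ∉ D := by
  by_contra hcon
  push_neg at hcon
  classical
  set s : Finset V := (D.map Prod.fst).toFinset with hs
  have hkey : ∀ a : V, ∃ x, a ∈ s → (x, a) ∈ D := by
    intro a
    by_cases ha : a ∈ s
    · rw [hs, Multiset.mem_toFinset, Multiset.mem_map] at ha
      obtain ⟨e, he, rfl⟩ := ha
      obtain ⟨x, hx⟩ := hcon e he
      exact ⟨x, fun _ => hx⟩
    · exact ⟨a, fun h => absurd h ha⟩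
  choose g hg using hkey
  have hgs : ∀ a ∈ s, g a ∈ s := fun a ha =>
    Multiset.mem_toFinset.2 (Multiset.mem_map.2 ⟨(g a, a), hg a ha, rfl⟩)
  obtain ⟨e0, he0⟩ := Multiset.exists_mem_of_ne_zero hne
  set f : ℕ → V := fun n => g^[n] e0.1 with hf
  have hfs : ∀ n, f n ∈ s := by
    intro n
    induction n with
    | zero =>
      show g^[0] e0.1 ∈ s
      simp only [Function.iterate_zero, id_eq]
      exact Multiset.mem_toFinset.2 (Multiset.mem_map.2 ⟨e0, he0, rfl⟩)
    | succ k ihk =>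
      show g^[k + 1] e0.1 ∈ s
      rw [Function.iterate_succ_apply']
      exact hgs _ ihk
  have hedge : ∀ n, (f (n + 1), f n) ∈ D := by
    intro n
    have h1 : f (n + 1) = g (f n) := Function.iterate_succ_apply' g n e0.1
    rw [h1]
    exact hg _ (hfs n)
  have htrans : ∀ i d, Relation.TransGen (fun a b => (a, b) ∈ D) (f (i + d + 1)) (f i) := by
    intro i d
    induction d with
    | zero => exact Relation.TransGen.single (hedge i)
    | succ k ihk =>
      rw [show i + (k + 1) + 1 = (i + k + 1) + 1 by omega]
      exact Relation.TransGen.head (hedge (i + k + 1)) ihk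
  have key : ∀ i j, i < j → f i ≠ f j := by
    intro i j hij heq
    have h1 := htrans i (j - i - 1)
    rw [show i + (j - i - 1) + 1 = j by omega] at h1
    rw [← heq] at h1
    exact hac (f i) h1
  obtain ⟨i, j, hij, hfeq⟩ :=
    Finite.exists_ne_map_eq_of_infinite (fun n : ℕ => (⟨f n, hfs n⟩ : {x // x ∈ s}))
  have hfeq' : f i = f j := congrArg Subtype.val hfeq
  rcases hij.lt_or_gt with hlt | hlt
  · exact key i j hlt hfeq'
  · exact key j i hlt hfeq'.symm

/-! ### Acyclic + nonnegative balance implies orderable -/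

lemma orderable_of_acyclic (G : SimpleGraph V) : ∀ (n : ℕ) (D : Multiset (V × V)) (p : V → ℕ),
    Multiset.card D ≤ n → DAcyclic D → (∀ e ∈ D, G.Adj e.1 e.2) →
    (∀ w, 0 ≤ balance D p w) → Orderable G D p := by
  intro n
  induction n with
  | zero =>
    intro D p hc _ _ _
    have hD : D = 0 := Multiset.card_eq_zero.1 (Nat.le_zero.1 hc)
    exact ⟨[], by simp [hD], trivial⟩
  | succ n ih =>
    intro D p hc hac hadj hbal
    rcases eq_or_ne D 0 with rfl | hne
    · exact ⟨[], by simp, trivial⟩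
    · obtain ⟨e, heD, hsrc⟩ := exists_source hac hne
      obtain ⟨E, rfl⟩ := Multiset.exists_cons_of_mem heD
      obtain ⟨a, b⟩ := e
      have hab : G.Adj a b := hadj (a, b) (Multiset.mem_cons_self _ _)
      have hindeg : indeg ((a, b) ::ₘ E) a = 0 := by
        unfold indeg
        rw [Multiset.card_eq_zero, Multiset.filter_eq_nil]
        intro f hf hfa
        exact hsrc f.1 (by rwa [show (f.1, a) = f by rw [← hfa]])
      have houtpos : 1 ≤ outdeg ((a, b) ::ₘ E) a := by
        have hmemf : (a, b) ∈ Multiset.filter (fun e : V × V => e.1 = a) ((a, b) ::ₘ E) :=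
          Multiset.mem_filter.2 ⟨Multiset.mem_cons_self _ _, rfl⟩
        exact Multiset.card_pos_iff_exists_mem.2 ⟨_, hmemf⟩
      have hpa : 2 ≤ p a := by
        have h0 := hbal a
        unfold balance at h0
        rw [hindeg] at h0
        omega
      have hbalE : ∀ w, balance E (applyMove p a b) w = balance ((a, b) ::ₘ E) p w := by
        intro w
        unfold balance
        rw [indeg_cons, outdeg_cons, applyMove_cast hpa]
        push_cast
        ring
      have hcE : Multiset.card E ≤ n := by
        have : Multiset.card ((a, b) ::ₘ E) = Multiset.card E + 1 := by simp
        omega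
      obtain ⟨σ', hσ', hval'⟩ := ih E (applyMove p a b) hcE
        (hac.mono (Multiset.le_cons_self _ _))
        (fun f hf => hadj f (Multiset.mem_cons_of_mem hf))
        (fun w => by rw [hbalE]; exact hbal w)
      refine ⟨(a, b) :: σ', ?_, hab, hpa, hval'⟩
      rw [show (((a, b) :: σ' : List (V × V)) : Multiset (V × V)) = (a, b) ::ₘ ↑σ' from rfl, hσ']

/-- No Cycle Lemma. -/
theorem no_cycle_lemma (G : SimpleGraph V) (D : Multiset (V × V)) (p : V → ℕ)
    (h : Orderable G D p) :
    ∃ D' ≤ D, DAcyclic D' ∧ Orderable G D' p ∧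
      ∀ v : V, balance D p v ≤ balance D' p v := by
  obtain ⟨σ, hσ, hval⟩ := h
  have hbal : ∀ w, 0 ≤ balance D p w := by
    intro w
    rw [← hσ, ← valid_applySeq hval w]
    exact Int.ofNat_nonneg _
  have hadj : ∀ e ∈ D, G.Adj e.1 e.2 := by
    rw [← hσ]
    intro e he
    exact adj_of_valid hval e (by exact_mod_cast he)
  obtain ⟨D', hle, hac, hbal'⟩ := exists_acyclic_sub p (Multiset.card D) D le_rfl
  refine ⟨D', hle, hac, ?_, hbal'⟩
  exact orderable_of_acyclic G (Multiset.card D') D' p le_rfl hac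
    (fun e he => hadj e (Multiset.mem_of_le hle he))
    (fun w => (hbal w).trans (hbal' w))
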